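/- Let v₀, …, v_d be points of ℝ^d and let δ = max_{i,j} ‖vᵢ − vⱼ‖ be the diameter of this point set. Then there exists a point c ∈ ℝ^d such that the convex hull S of v₀, …, v_d is contained in the closed ball of radius √(d / (2(d+1))) · δ centered at c. -/

import Mathlib

open scoped RealInnerProductSpace
open Finset

section Aux

variable {E : Type*} [NormedAddCommGroup E] [InnerProductSpace ℝ E]

/-- auxiliary: the objective function -/
private noncomputable def jungG {n : ℕ} (v : Fin n → E) (l : Fin n → ℝ) : ℝ :=
  (∑ i, l i * ‖v i‖ ^ 2) - ‖∑ i, l i • v i‖ ^ 2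

private lemma jungG_eq {n : ℕ} (v : Fin n → E) (l : Fin n → ℝ) (hl1 : ∑ i, l i = 1) :
    jungG v l = ∑ i, l i * ‖v i - ∑ j, l j • v j‖ ^ 2 := by
  set c : E := ∑ j, l j • v j with hc
  have hinner : ∑ i, l i * ⟪v i, c⟫ = ‖c‖ ^ 2 := by
    calc ∑ i, l i * ⟪v i, c⟫ = ∑ i, ⟪l i • v i, c⟫ := by
          simp [real_inner_smul_left]
      _ = ⟪c, c⟫ := by rw [hc]; exact (sum_inner _ _ _).symm
      _ = ‖c‖ ^ 2 := real_inner_self_eq_norm_sq c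
  have hexp : ∀ i, l i * ‖v i - c‖ ^ 2
      = l i * ‖v i‖ ^ 2 - 2 * (l i * ⟪v i, c⟫) + l i * ‖c‖ ^ 2 := by
    intro i
    rw [norm_sub_sq_real]; ring
  rw [Finset.sum_congr rfl fun i _ => hexp i]
  rw [Finset.sum_add_distrib, Finset.sum_sub_distrib, ← Finset.mul_sum, ← Finset.sum_mul,
    hinner, hl1, one_mul]
  simp only [jungG, ← hc]
  ring

end Aux

set_option maxHeartbeats 1000000 in
/-- Jung-type enclosing-ball bound (Stämpfle, Lemma 4.3): if `δ` is the diameter of the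
point set `{v₀, …, v_d} ⊆ ℝ^d` (the maximum pairwise distance), then the convex hull of
the points is contained in a closed ball of radius `√(d / (2(d+1))) · δ`. -/
theorem convexHull_subset_closedBall_jung
    (d : ℕ) (v : Fin (d + 1) → EuclideanSpace ℝ (Fin d)) (δ : ℝ)
    (hδ : IsGreatest {r : ℝ | ∃ i j, r = ‖v i - v j‖} δ) :
    ∃ c : EuclideanSpace ℝ (Fin d),
      convexHull ℝ (Set.range v) ⊆
        Metric.closedBall c (Real.sqrt ((d : ℝ) / (2 * ((d : ℝ) + 1))) * δ) := by
  classical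
  obtain ⟨⟨i0, j0, hij⟩, hub⟩ := hδ
  have hδ0 : 0 ≤ δ := hij ▸ norm_nonneg _
  have hdist : ∀ i j, ‖v i - v j‖ ≤ δ := fun i j => hub ⟨i, j, rfl⟩
  -- maximize G over the standard simplex
  have hcont : ContinuousOn (jungG v) (stdSimplex ℝ (Fin (d + 1))) := by
    apply Continuous.continuousOn
    apply Continuous.sub
    · exact continuous_finset_sum _ fun i _ => (continuous_apply i).mul continuous_const
    · exact ((continuous_finset_sum _ fun i _ =>
        (continuous_apply i).smul continuous_const).norm).pow 2
  obtain ⟨l, hl, hmax⟩ := (isCompact_stdSimplex ℝ _).exists_isMaxOn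
    ⟨_, ite_eq_mem_stdSimplex ℝ (0 : Fin (d + 1))⟩ hcont
  obtain ⟨hl0, hl1⟩ := hl
  set c : EuclideanSpace ℝ (Fin d) := ∑ j, l j • v j with hc
  refine ⟨c, ?_⟩
  have hGl : jungG v l = ∑ i, l i * ‖v i - c‖ ^ 2 := jungG_eq v l hl1
  -- ∑ lᵢ • (vᵢ - c) = 0
  have hzero : ∑ i, l i • (v i - c) = 0 := by
    simp only [smul_sub, Finset.sum_sub_distrib, ← Finset.sum_smul, hl1, one_smul, ← hc,
      sub_self]
  -- key: maximality gives ‖vᵢ - c‖² ≤ G l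
  have hball : ∀ i, ‖v i - c‖ ^ 2 ≤ jungG v l := by
    intro i
    set B : ℝ := ‖v i - c‖ ^ 2 with hB
    have hB0 : 0 ≤ B := sq_nonneg _
    have key : ∀ t : ℝ, 0 < t → t ≤ 1 → B - jungG v l ≤ t * B := by
      intro t ht0 ht1
      set m : Fin (d + 1) → ℝ := fun j => (1 - t) * l j + t * (if i = j then 1 else 0) with hm
      have hmem : m ∈ stdSimplex ℝ (Fin (d + 1)) := by
        constructor
        · intro j
          have := hl0 j
          dsimp [m]
          split <;> nlinarith
        · simp [m, Finset.sum_add_distrib, ← Finset.mul_sum, hl1]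
      have hle : jungG v m ≤ jungG v l := hmax hmem
      have hsum_m : ∑ j, m j • v j = c + t • (v i - c) := by
        simp only [hm, add_smul, mul_smul, Finset.sum_add_distrib, ← Finset.smul_sum, ← hc]
        rw [Finset.sum_congr rfl (fun j _ => by
          rw [show ((if i = j then (1:ℝ) else 0) • v j) = (if i = j then v j else 0) by
            split <;> simp])]
        rw [Finset.sum_ite_eq _ i v]
        simp [smul_sub, sub_smul, one_smul]
        abel
      have hlin_m : ∑ j, m j * ‖v j‖ ^ 2
          = (1 - t) * (∑ j, l j * ‖v j‖ ^ 2) + t * ‖v i‖ ^ 2 := by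
        simp only [hm, add_mul, mul_assoc, Finset.sum_add_distrib, ← Finset.mul_sum]
        congr 1
        rw [Finset.sum_congr rfl (fun j _ => by
          rw [show ((if i = j then (1:ℝ) else 0) * ‖v j‖ ^ 2)
            = (if i = j then ‖v j‖ ^ 2 else 0) by split <;> simp])]
        rw [Finset.sum_ite_eq _ i fun j => ‖v j‖ ^ 2]
        simp
      have hnorm_m : ‖∑ j, m j • v j‖ ^ 2
          = ‖c‖ ^ 2 + 2 * (t * ⟪c, v i - c⟫) + t ^ 2 * B := by
        rw [hsum_m, norm_add_sq_real, real_inner_smul_right, norm_smul]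
        simp [hB, mul_pow, abs_of_pos ht0]
      have hGm : jungG v m = (1 - t) * (∑ j, l j * ‖v j‖ ^ 2) + t * ‖v i‖ ^ 2
          - (‖c‖ ^ 2 + 2 * (t * ⟪c, v i - c⟫) + t ^ 2 * B) := by
        rw [jungG, hlin_m, hnorm_m]
      -- A := ‖vᵢ‖² - L₀ - 2⟪c, vᵢ - c⟫  satisfies A = B - G l
      have hA : ‖v i‖ ^ 2 - (∑ j, l j * ‖v j‖ ^ 2) - 2 * ⟪c, v i - c⟫ = B - jungG v l := by
        have h1 : B = ‖v i‖ ^ 2 - 2 * ⟪v i, c⟫ + ‖c‖ ^ 2 := by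
          rw [hB, norm_sub_sq_real]
        have h2 : jungG v l = (∑ j, l j * ‖v j‖ ^ 2) - ‖c‖ ^ 2 := rfl
        have h3 : ⟪c, v i - c⟫ = ⟪c, v i⟫ - ⟪c, c⟫ := inner_sub_right c (v i) c
        have h4 : ⟪c, v i⟫ = ⟪v i, c⟫ := real_inner_comm _ _
        have h5 : ⟪c, c⟫ = ‖c‖ ^ 2 := real_inner_self_eq_norm_sq c
        rw [h1, h2, h3, h4, h5]; ring
      have : t * (B - jungG v l) ≤ t ^ 2 * B := by
        have := hle
        rw [hGm] at this
        have h2 : jungG v l = (∑ j, l j * ‖v j‖ ^ 2) - ‖c‖ ^ 2 := rfl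
        nlinarith [hA]
      have h' : t * (B - jungG v l) ≤ t * (t * B) := by nlinarith [this]
      exact (mul_le_mul_iff_right₀ ht0).mp h'
    -- conclude B ≤ G l
    by_contra hcon
    push_neg at hcon
    set a : ℝ := B - jungG v l with ha
    have ha0 : 0 < a := by simp [ha]; linarith
    have ht0 : 0 < min 1 (a / (2 * (B + 1))) := by positivity
    have ht1 : min 1 (a / (2 * (B + 1))) ≤ 1 := min_le_left _ _
    have h := key _ ht0 ht1
    have h2 : min 1 (a / (2 * (B + 1))) * B ≤ (a / (2 * (B + 1))) * B :=
      mul_le_mul_of_nonneg_right (min_le_right _ _) hB0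
    have h3 : (a / (2 * (B + 1))) * B < a := by
      rw [div_mul_eq_mul_div, div_lt_iff₀ (by positivity)]
      nlinarith
    linarith
  -- per-j bound: G l + ‖vⱼ - c‖² ≤ δ²(1 - lⱼ)
  have hperj : ∀ j, jungG v l + ‖v j - c‖ ^ 2 ≤ δ ^ 2 * (1 - l j) := by
    intro j
    have hid : ∑ i, l i * ‖v i - v j‖ ^ 2 = jungG v l + ‖v j - c‖ ^ 2 := by
      have hterm : ∀ i, l i * ‖v i - v j‖ ^ 2
          = l i * ‖v i - c‖ ^ 2 - 2 * ⟪l i • (v i - c), v j - c⟫ + l i * ‖v j - c‖ ^ 2 := by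
        intro i
        have : v i - v j = (v i - c) - (v j - c) := by abel
        rw [this, norm_sub_sq_real, real_inner_smul_left]; ring
      rw [Finset.sum_congr rfl fun i _ => hterm i]
      rw [Finset.sum_add_distrib, Finset.sum_sub_distrib, ← Finset.mul_sum,
        ← sum_inner, hzero, ← Finset.sum_mul, hl1]
      simp [hGl]
    rw [← hid]
    have hbound : ∑ i, l i * ‖v i - v j‖ ^ 2 ≤ ∑ i, l i * (if i = j then 0 else δ ^ 2) := by
      apply Finset.sum_le_sum
      intro i _
      by_cases hij' : i = j
      · simp [hij']
      · simp only [hij', if_false]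
        have h1 : ‖v i - v j‖ ^ 2 ≤ δ ^ 2 :=
          pow_le_pow_left₀ (norm_nonneg _) (hdist i j) 2
        exact mul_le_mul_of_nonneg_left h1 (hl0 i)
    have heq : ∑ i, l i * (if i = j then 0 else δ ^ 2) = δ ^ 2 * (1 - l j) := by
      rw [Finset.sum_congr rfl (fun i _ => by
        rw [show (l i * if i = j then (0:ℝ) else δ ^ 2)
          = l i * δ ^ 2 - (if i = j then l i * δ ^ 2 else 0) by split <;> ring])]
      rw [Finset.sum_sub_distrib, Finset.sum_ite_eq' _ j fun i => l i * δ ^ 2]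
      rw [← Finset.sum_mul, hl1]
      simp; ring
    linarith [hbound, heq ▸ hbound]
  -- 2 G l ≤ δ² (1 - ∑ lⱼ²)
  have hsumsq : (1 : ℝ) ≤ (d + 1 : ℝ) * ∑ j, l j ^ 2 := by
    have := sq_sum_le_card_mul_sum_sq (s := Finset.univ) (f := l)
    rw [hl1] at this
    simpa using this
  have h2G : 2 * jungG v l ≤ δ ^ 2 * (1 - ∑ j, l j ^ 2) := by
    have hs : ∑ j, l j * (jungG v l + ‖v j - c‖ ^ 2) ≤ ∑ j, l j * (δ ^ 2 * (1 - l j)) :=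
      Finset.sum_le_sum fun j _ => mul_le_mul_of_nonneg_left (hperj j) (hl0 j)
    have hLHS : ∑ j, l j * (jungG v l + ‖v j - c‖ ^ 2) = 2 * jungG v l := by
      simp only [mul_add, Finset.sum_add_distrib, ← Finset.sum_mul, hl1, one_mul, ← hGl]
      ring
    have hRHS : ∑ j, l j * (δ ^ 2 * (1 - l j)) = δ ^ 2 * (1 - ∑ j, l j ^ 2) := by
      rw [Finset.sum_congr rfl fun j (_ : j ∈ Finset.univ) =>
        (show l j * (δ ^ 2 * (1 - l j)) = δ ^ 2 * l j - δ ^ 2 * l j ^ 2 by ring)]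
      rw [Finset.sum_sub_distrib, ← Finset.mul_sum, ← Finset.mul_sum, hl1]
      ring
    rw [hLHS] at hs
    rw [hRHS] at hs
    exact hs
  -- G l ≤ δ² d / (2(d+1))
  have hd1 : (0:ℝ) < (d : ℝ) + 1 := by positivity
  have hGbound : jungG v l ≤ (d : ℝ) / (2 * ((d : ℝ) + 1)) * δ ^ 2 := by
    have h1 : 1 - ∑ j, l j ^ 2 ≤ (d : ℝ) / ((d : ℝ) + 1) := by
      rw [le_div_iff₀ hd1]
      nlinarith
    have h2 : δ ^ 2 * (1 - ∑ j, l j ^ 2) ≤ δ ^ 2 * ((d : ℝ) / ((d : ℝ) + 1)) :=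
      mul_le_mul_of_nonneg_left h1 (sq_nonneg δ)
    have h3 := le_trans h2G h2
    have h4 : δ ^ 2 * ((d : ℝ) / ((d : ℝ) + 1)) = 2 * ((d : ℝ) / (2 * ((d : ℝ) + 1)) * δ ^ 2) := by
      field_simp
    rw [h4] at h3
    linarith
  -- finish
  set r : ℝ := Real.sqrt ((d : ℝ) / (2 * ((d : ℝ) + 1))) * δ with hr
  have hr0 : 0 ≤ r := by positivity
  have hrsq : r ^ 2 = (d : ℝ) / (2 * ((d : ℝ) + 1)) * δ ^ 2 := by
    rw [hr, mul_pow, Real.sq_sqrt (by positivity)]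
  apply convexHull_min _ (convex_closedBall c r)
  rintro x ⟨i, rfl⟩
  rw [Metric.mem_closedBall, dist_eq_norm]
  have h1 : ‖v i - c‖ ^ 2 ≤ r ^ 2 := by
    calc ‖v i - c‖ ^ 2 ≤ jungG v l := hball i
      _ ≤ (d : ℝ) / (2 * ((d : ℝ) + 1)) * δ ^ 2 := hGbound
      _ = r ^ 2 := hrsq.symm
  calc ‖v i - c‖ = Real.sqrt (‖v i - c‖ ^ 2) := (Real.sqrt_sq (norm_nonneg _)).symm
    _ ≤ Real.sqrt (r ^ 2) := Real.sqrt_le_sqrt h1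
    _ = r := Real.sqrt_sq hr0
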